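/- If a graph G has an H-partition of layered width at most ℓ for some graph H, then G is isomorphic to a subgraph of the strong product H ⊠ P ⊠ K_ℓ for some path P. Conversely, if G is a subgraph of H ⊠ P ⊠ K_ℓ for some path P, then G has an H-partition of layered width at most ℓ. -/

import Mathlib

open SimpleGraph Set

/-- A layering of a graph: an ordered partition `(L 0, L 1, …)` of the vertex set
such that every edge joins vertices in the same or consecutive layers. -/
def IsLayering {α : Type} (G : SimpleGraph α) (L : ℕ → Set α) : Prop :=
  (∀ v, ∃! i, v ∈ L i) ∧
  ∀ ⦃v w : α⦄, G.Adj v w → ∀ ⦃i j : ℕ⦄, v ∈ L i → w ∈ L j → i ≤ j + 1 ∧ j ≤ i + 1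

/-- A tree-decomposition of `G` with tree `tG` and bags `B`. -/
def IsTreeDecomp {α T : Type} (G : SimpleGraph α) (tG : SimpleGraph T) (B : T → Set α) : Prop :=
  tG.IsTree ∧
  (∀ v : α, (tG.induce {x | v ∈ B x}).Connected) ∧
  (∀ ⦃v w : α⦄, G.Adj v w → ∃ x, v ∈ B x ∧ w ∈ B x)

/-- `G` has treewidth (strictly) less than `k`: a tree-decomposition with bags of size at most `k`. -/
def TreewidthLT {α : Type} (G : SimpleGraph α) (k : ℕ) : Prop :=
  ∃ (T : Type) (tG : SimpleGraph T) (B : T → Set α),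
    IsTreeDecomp G tG B ∧ ∀ x, (B x).encard ≤ k

/-- `G` has treewidth at most `t`. -/
def TreewidthAtMost {α : Type} (G : SimpleGraph α) (t : ℕ) : Prop :=
  TreewidthLT G (t + 1)

/-- Maximum degree at most `Δ`. -/
def MaxDegreeLE {α : Type} (G : SimpleGraph α) (Δ : ℕ) : Prop :=
  ∀ v, (G.neighborSet v).encard ≤ Δ

/-- A colouring `f` has clustering at most `s`: every monochromatic component
(the set of vertices joined to `v` by a monochromatic walk) has at most `s` vertices. -/
def HasClustering {α β : Type} (G : SimpleGraph α) (f : α → β) (s : ℕ) : Prop :=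
  ∀ v : α, {w | ∃ p : G.Walk v w, ∀ u ∈ p.support, f u = f v}.encard ≤ s

/-- Quotient graph of a graph by an indexed partition. -/
def QuotGraph {α ι : Type} (G : SimpleGraph α) (P : ι → Set α) : SimpleGraph ι where
  Adj x y := x ≠ y ∧ ∃ v w, v ∈ P x ∧ w ∈ P y ∧ G.Adj v w
  symm := by constructor; rintro x y ⟨h, v, w, hv, hw, hvw⟩; exact ⟨h.symm, w, v, hw, hv, hvw.symm⟩
  loopless := by constructor; rintro x ⟨h, _⟩; exact h rfl

/-- The strong product of two graphs. -/
def StrongProd {α β : Type} (A : SimpleGraph α) (B : SimpleGraph β) : SimpleGraph (α × β) where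
  Adj x y := x ≠ y ∧ (x.1 = y.1 ∨ A.Adj x.1 y.1) ∧ (x.2 = y.2 ∨ B.Adj x.2 y.2)
  symm := by
    constructor
    rintro x y ⟨h, h1, h2⟩
    exact ⟨h.symm, h1.imp Eq.symm Adj.symm, h2.imp Eq.symm Adj.symm⟩
  loopless := by constructor; rintro x ⟨h, _⟩; exact h rfl

/-- The one-way infinite path on `ℕ`. -/
def NatPath : SimpleGraph ℕ where
  Adj i j := j = i + 1 ∨ i = j + 1
  symm := by constructor; rintro i j (h | h); exacts [Or.inr h, Or.inl h]
  loopless := by constructor; rintro i (h | h) <;> omega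

/-- The `p`-th power of a graph: join vertices at distance between 1 and `p`. -/
def PowerGraph {α : Type} (G : SimpleGraph α) (p : ℕ) : SimpleGraph α where
  Adj v w := v ≠ w ∧ ∃ q : G.Walk v w, q.length ≤ p
  symm := by constructor; rintro v w ⟨h, q, hq⟩; exact ⟨h.symm, q.reverse, by simpa using hq⟩
  loopless := by constructor; rintro v ⟨h, _⟩; exact h rfl

/-- `G` has layered treewidth at most `k`. -/
def LayeredTreewidthLE {α : Type} (G : SimpleGraph α) (k : ℕ) : Prop :=
  ∃ (T : Type) (tG : SimpleGraph T) (B : T → Set α) (L : ℕ → Set α),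
    IsTreeDecomp G tG B ∧ IsLayering G L ∧ ∀ x i, (B x ∩ L i).encard ≤ k

/-- An `H`-partition of `G`: parts indexed by vertices of `H` such that every edge of `G`
lies within a part or between parts adjacent in `H`. -/
def IsGraphPartition {α ι : Type} (G : SimpleGraph α) (H : SimpleGraph ι) (A : ι → Set α) : Prop :=
  (∀ v, ∃! x, v ∈ A x) ∧
  ∀ ⦃v w : α⦄, G.Adj v w → ∀ ⦃x y : ι⦄, v ∈ A x → w ∈ A y → x = y ∨ H.Adj x y

/-- A `(k,ℓ)`-partition: a partition into nonempty parts whose quotient has treewidth at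
most `k`, having layered width at most `ℓ` with respect to some layering. -/
def HasKLPartition {α : Type} (G : SimpleGraph α) (k ℓ : ℕ) : Prop :=
  ∃ (ι : Type) (P : ι → Set α),
    (∀ v, ∃! x, v ∈ P x) ∧ (∀ x, (P x).Nonempty) ∧
    TreewidthAtMost (QuotGraph G P) k ∧
    ∃ L, IsLayering G L ∧ ∀ x i, (P x ∩ L i).encard ≤ ℓ

/-- `G` has an `H`-partition of layered width at most `ℓ` if and only if `G` is
(isomorphic to) a subgraph of the strong product `H ⊠ P ⊠ K_ℓ`, where `P` is the path on
`{0,1,2,…}`. -/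
theorem stmt5 {α ι : Type} (G : SimpleGraph α) (H : SimpleGraph ι) (ℓ : ℕ) :
    (∃ A : ι → Set α, IsGraphPartition G H A ∧
      ∃ L, IsLayering G L ∧ ∀ x i, (A x ∩ L i).encard ≤ ℓ) ↔
    (∃ φ : α → ι × ℕ × Fin ℓ, Function.Injective φ ∧ ∀ ⦃v w⦄, G.Adj v w →
      (StrongProd H (StrongProd NatPath (completeGraph (Fin ℓ)))).Adj (φ v) (φ w)) := by
  classical
  constructor
  · rintro ⟨A, ⟨hA1, hA2⟩, L, ⟨hL1, hL2⟩, hw⟩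
    choose x hx hxu using hA1
    choose i hi hiu using hL1
    have hemb : ∀ (a : ι) (b : ℕ), Nonempty (↥(A a ∩ L b) ↪ Fin ℓ) := by
      intro a b
      have h := hw a b
      have hfin : (A a ∩ L b).Finite := Set.finite_of_encard_le_coe h
      haveI := hfin.fintype
      apply Function.Embedding.nonempty_of_card_le
      rw [Fintype.card_fin]
      have h2 : (A a ∩ L b).encard = (Fintype.card ↥(A a ∩ L b) : ℕ) := by
        rw [Set.encard_eq_coe_toFinset_card, Set.toFinset_card]
      rw [h2] at h
      exact_mod_cast h
    have e : ∀ (a : ι) (b : ℕ), ↥(A a ∩ L b) ↪ Fin ℓ := fun a b => (hemb a b).some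
    have hmem : ∀ v, v ∈ A (x v) ∩ L (i v) := fun v => ⟨hx v, hi v⟩
    set φ : α → ι × ℕ × Fin ℓ := fun v => (x v, i v, e (x v) (i v) ⟨v, hmem v⟩) with hφ
    have hinj : Function.Injective φ := by
      intro v w h
      simp only [hφ, Prod.mk.injEq] at h
      obtain ⟨h1, h2, h3⟩ := h
      have hvmem : v ∈ A (x w) ∩ L (i w) := by rw [← h1, ← h2]; exact hmem v
      have key : ∀ (a : ι) (b : ℕ) (ha : x v = a) (hb : i v = b) (hm : v ∈ A a ∩ L b),
          e (x v) (i v) ⟨v, hmem v⟩ = e a b ⟨v, hm⟩ := by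
        rintro a b rfl rfl hm; rfl
      have h3' : e (x w) (i w) ⟨v, hvmem⟩ = e (x w) (i w) ⟨w, hmem w⟩ :=
        (key (x w) (i w) h1 h2 hvmem).symm.trans h3
      have := (e (x w) (i w)).injective h3'
      exact congrArg Subtype.val this
    refine ⟨φ, hinj, fun v w hvw => ?_⟩
    have hne : φ v ≠ φ w := fun h => hvw.ne (hinj h)
    refine ⟨hne, hA2 hvw (hx v) (hx w), ?_⟩
    by_cases hp : (φ v).2 = (φ w).2
    · exact Or.inl hp
    · refine Or.inr ⟨hp, ?_, ?_⟩
      · have := hL2 hvw (hi v) (hi w)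
        simp only [hφ]
        rcases Nat.lt_trichotomy (i v) (i w) with h | h | h
        · exact Or.inr (Or.inl (by omega))
        · exact Or.inl h
        · exact Or.inr (Or.inr (by omega))
      · by_cases hf : (φ v).2.2 = (φ w).2.2
        · exact Or.inl hf
        · exact Or.inr hf
  · rintro ⟨φ, hinj, hadj⟩
    refine ⟨fun a => {v | (φ v).1 = a}, ⟨fun v => ⟨(φ v).1, rfl, fun y h => h.symm⟩, ?_⟩,
      fun b => {v | (φ v).2.1 = b}, ⟨fun v => ⟨(φ v).2.1, rfl, fun y h => h.symm⟩, ?_⟩, ?_⟩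
    · intro v w hvw a b hv hw
      obtain ⟨_, h1, _⟩ := hadj hvw
      rcases h1 with h1 | h1
      · exact Or.inl (hv ▸ hw ▸ h1)
      · exact Or.inr (hv ▸ hw ▸ h1)
    · intro v w hvw b c hv hw
      obtain ⟨_, _, h2⟩ := hadj hvw
      simp only [Set.mem_setOf_eq] at hv hw
      rcases h2 with h2 | ⟨_, h3, _⟩
      · have : (φ v).2.1 = (φ w).2.1 := by rw [h2]
        omega
      · rcases h3 with h3 | h3
        · rw [hv, hw] at h3; omega
        · rcases h3 with h3 | h3 <;> omega
    · intro a b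
      have hIO : Set.InjOn (fun v => (φ v).2.2)
          ({v | (φ v).1 = a} ∩ {v | (φ v).2.1 = b}) := by
        rintro v ⟨hv1, hv2⟩ w ⟨hw1, hw2⟩ h
        apply hinj
        have : (φ v).2 = (φ w).2 := Prod.ext (hv2.trans hw2.symm) h
        exact Prod.ext (hv1.trans hw1.symm) this
      calc ({v | (φ v).1 = a} ∩ {v | (φ v).2.1 = b}).encard
          = ((fun v => (φ v).2.2) '' _).encard := (hIO.encard_image).symm
        _ ≤ (Set.univ : Set (Fin ℓ)).encard := Set.encard_le_encard (Set.subset_univ _)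
        _ = ℓ := by simp [Set.encard_univ]
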